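/- arXiv:1609.05791 — 2 statements merged into one kernel-verified Lean document; each statement's English description precedes it below -/
import Mathlib

section
/- If 𝓝 is a standard Gaussian random variable, then for every t ≥ 0 the Laplace transform of 𝓝^{−2} is E[exp(−t 𝓝^{−2})] = exp(−√(2t)). -/
open MeasureTheory ProbabilityTheory Filter Set Topology

open Real


-- basic facts about g x = x - c/x on Ioi 0
lemma g_deriv {c : ℝ} (hc : 0 < c) {x : ℝ} (hx : x ∈ Ioi (0:ℝ)) :
    HasDerivWithinAt (fun x : ℝ => x - c / x) (1 + c / x ^ 2) (Ioi 0) x := by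
  have hx0 : x ≠ 0 := ne_of_gt hx
  have h := ((hasDerivAt_id x).sub (((hasDerivAt_inv hx0).const_mul c)))
  simp only [mul_neg, sub_neg_eq_add] at h
  have : (fun x : ℝ => x - c / x) = fun x : ℝ => x - c * x⁻¹ := by
    ext y; rw [div_eq_mul_inv]
  rw [this]
  exact h.hasDerivWithinAt.congr_deriv (by rw [div_eq_mul_inv])

lemma g_inj {c : ℝ} (hc : 0 < c) : InjOn (fun x : ℝ => x - c / x) (Ioi 0) := by
  intro x hx y hy hxy
  simp only [mem_Ioi] at hx hy
  simp only at hxy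
  have h1 : x * y > 0 := mul_pos hx hy
  have : (x - y) * (x * y + c) = 0 := by field_simp at hxy; nlinarith [hxy]
  have h2 : x * y + c > 0 := by linarith
  have := mul_eq_zero.1 this
  rcases this with h | h
  · linarith
  · linarith

lemma g_surj {c : ℝ} (hc : 0 < c) : (fun x : ℝ => x - c / x) '' (Ioi 0) = univ := by
  apply eq_univ_of_forall
  intro u
  set s := Real.sqrt (u^2 + 4*c) with hs
  have hs2 : s^2 = u^2 + 4*c := Real.sq_sqrt (by positivity)
  have hsnn : 0 ≤ s := Real.sqrt_nonneg _
  have hsu : -u < s := by nlinarith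
  refine ⟨(u + s)/2, ?_, ?_⟩
  · simp only [mem_Ioi]; linarith
  · have hup : (0:ℝ) < u + s := by linarith
    have hx : u + s ≠ 0 := ne_of_gt hup
    show (u+s)/2 - c/((u+s)/2) = u
    field_simp
    ring_nf
    nlinarith

lemma gauss_half : ∫ x : ℝ, Real.exp (-x^2/2) = Real.sqrt (2*Real.pi) := by
  have h := integral_gaussian (1/2 : ℝ)
  simp only [neg_mul] at h
  rw [show (Real.pi / (1/2)) = 2 * Real.pi by ring] at h
  rw [← h]
  congr 1
  ext x
  ring_nf

lemma lemA {c : ℝ} (hc : 0 < c) :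
    ∫ x in Ioi (0:ℝ), (1 + c / x^2) * Real.exp (-((x^2 + c^2/x^2)/2))
      = Real.exp (-c) * Real.sqrt (2*Real.pi) := by
  have h := integral_image_eq_integral_abs_deriv_smul measurableSet_Ioi
    (fun x hx => g_deriv hc hx) (g_inj hc) (fun u => Real.exp (-u^2/2))
  rw [g_surj hc] at h
  rw [Measure.restrict_univ] at h
  rw [gauss_half] at h
  rw [h]
  rw [← integral_const_mul]
  apply setIntegral_congr_fun measurableSet_Ioi
  intro x hx
  have hx0 : (0:ℝ) < x := hx
  have h1 : (0:ℝ) < 1 + c / x^2 := by positivity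
  simp only [smul_eq_mul]
  rw [abs_of_pos h1]
  rw [← mul_assoc, mul_comm (Real.exp (-c)), mul_assoc]
  congr 1
  rw [← Real.exp_add]
  congr 1
  have : (x - c/x)^2 = x^2 - 2*c + c^2/x^2 := by
    field_simp; ring
  rw [this]
  ring

lemma intA {c : ℝ} (hc : 0 < c) :
    IntegrableOn (fun x : ℝ => (1 + c / x^2) * Real.exp (-((x^2 + c^2/x^2)/2))) (Ioi 0) := by
  have h := (integrableOn_image_iff_integrableOn_abs_deriv_smul measurableSet_Ioi
    (fun x hx => g_deriv hc hx) (g_inj hc) (fun u => Real.exp (-u^2/2))).mp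
  rw [g_surj hc] at h
  have hint : IntegrableOn (fun u : ℝ => Real.exp (-u^2/2)) univ := by
    rw [integrableOn_univ]
    have := integrable_exp_neg_mul_sq (by norm_num : (0:ℝ) < 1/2)
    convert this using 2 with x
    ring_nf
  have h2 := h hint
  apply (integrableOn_congr_fun ?_ measurableSet_Ioi).mp (h2.const_mul (Real.exp (-c)))
  intro x hx
  have hx0 : (0:ℝ) < x := hx
  have h1 : (0:ℝ) < 1 + c / x^2 := by positivity
  simp only [smul_eq_mul]
  rw [abs_of_pos h1]
  rw [← mul_assoc, mul_comm (Real.exp (-c)), mul_assoc]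
  congr 1
  rw [← Real.exp_add]
  congr 1
  have : (x - c/x)^2 = x^2 - 2*c + c^2/x^2 := by
    field_simp; ring
  rw [this]
  ring

lemma lemB {c : ℝ} (hc : 0 < c) :
    ∫ x in Ioi (0:ℝ), (c / x^2) * Real.exp (-((x^2 + c^2/x^2)/2))
      = ∫ x in Ioi (0:ℝ), Real.exp (-((x^2 + c^2/x^2)/2)) := by
  have hderiv : ∀ x ∈ Ioi (0:ℝ), HasDerivWithinAt (fun x : ℝ => c / x) (-(c / x^2)) (Ioi 0) x := by
    intro x hx
    have hx0 : x ≠ 0 := ne_of_gt hx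
    have h := (hasDerivAt_inv hx0).const_mul c
    have heq : (fun x : ℝ => c / x) = fun x : ℝ => c * x⁻¹ := by
      ext y; rw [div_eq_mul_inv]
    rw [heq]
    exact h.hasDerivWithinAt.congr_deriv (by ring)
  have hinj : InjOn (fun x : ℝ => c / x) (Ioi 0) := by
    intro x hx y hy hxy
    simp only [mem_Ioi] at hx hy
    field_simp at hxy
    rcases hxy with h | h
    · rfl
  have himg : (fun x : ℝ => c / x) '' (Ioi 0) = Ioi 0 := by
    apply Subset.antisymm
    · rintro _ ⟨x, hx, rfl⟩
      exact div_pos hc hx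
    · intro y hy
      exact ⟨c / y, div_pos hc hy, by field_simp⟩
  have h := integral_image_eq_integral_abs_deriv_smul measurableSet_Ioi hderiv hinj
    (fun x => Real.exp (-((x^2 + c^2/x^2)/2)))
  rw [himg] at h
  have h2 : ∫ x in Ioi (0:ℝ), |(-(c / x^2))| • Real.exp (-(((c/x)^2 + c^2/(c/x)^2)/2))
      = ∫ x in Ioi (0:ℝ), (c / x^2) * Real.exp (-((x^2 + c^2/x^2)/2)) := by
    apply setIntegral_congr_fun measurableSet_Ioi
    intro x hx
    have hx0 : (0:ℝ) < x := hx
    simp only [smul_eq_mul, abs_neg]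
    rw [abs_of_pos (by positivity : (0:ℝ) < c / x^2)]
    congr 2
    rw [div_pow]
    field_simp
    ring
  rw [← h2, ← h]

lemma keyI {c : ℝ} (hc : 0 < c) :
    ∫ x in Ioi (0:ℝ), Real.exp (-((x^2 + c^2/x^2)/2))
      = Real.exp (-c) * Real.sqrt (2*Real.pi) / 2 := by
  have hAint := intA hc
  have hmeas : Measurable (fun x : ℝ => Real.exp (-((x^2 + c^2/x^2)/2))) := by
    apply Real.measurable_exp.comp
    apply Measurable.neg
    apply Measurable.div_const
    exact (measurable_id.pow_const 2).add ((measurable_const.div ((measurable_id.pow_const 2))))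
  have hfint : IntegrableOn (fun x : ℝ => Real.exp (-((x^2 + c^2/x^2)/2))) (Ioi 0) := by
    apply hAint.mono' hmeas.aestronglyMeasurable.restrict
    filter_upwards [ae_restrict_mem measurableSet_Ioi] with x hx
    have hx0 : (0:ℝ) < x := hx
    have h1 : (1:ℝ) ≤ 1 + c / x^2 := le_add_of_nonneg_right (div_pos hc (pow_pos hx0 2)).le
    have hfpos : (0:ℝ) < Real.exp (-((x^2 + c^2/x^2)/2)) := Real.exp_pos _
    rw [Real.norm_eq_abs, abs_of_pos hfpos]
    exact le_mul_of_one_le_left hfpos.le h1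
  have hBint : IntegrableOn (fun x : ℝ => (c / x^2) * Real.exp (-((x^2 + c^2/x^2)/2))) (Ioi 0) := by
    have hsub := hAint.sub hfint
    apply (integrableOn_congr_fun ?_ measurableSet_Ioi).mpr hsub
    intro x hx
    simp only [Pi.sub_apply]
    ring
  have hsplit : ∫ x in Ioi (0:ℝ), (1 + c / x^2) * Real.exp (-((x^2 + c^2/x^2)/2))
      = (∫ x in Ioi (0:ℝ), Real.exp (-((x^2 + c^2/x^2)/2)))
        + ∫ x in Ioi (0:ℝ), (c / x^2) * Real.exp (-((x^2 + c^2/x^2)/2)) := by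
    rw [← integral_add hfint hBint]
    apply setIntegral_congr_fun measurableSet_Ioi
    intro x hx
    simp only [Pi.add_apply]
    ring
  have hB := lemB hc
  have hA := lemA hc
  rw [hsplit, hB] at hA
  linarith

lemma main_integral {t : ℝ} (ht : 0 < t) :
    ∫ x : ℝ, gaussianPDFReal 0 1 x * Real.exp (-(t * (x^2)⁻¹))
      = Real.exp (-Real.sqrt (2*t)) := by
  set c := Real.sqrt (2*t) with hcdef
  have hc : 0 < c := Real.sqrt_pos.mpr (by linarith)
  have hc2 : c^2 = 2*t := Real.sq_sqrt (by linarith)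
  set F := fun x : ℝ => gaussianPDFReal 0 1 x * Real.exp (-(t * (x^2)⁻¹)) with hF
  have hFmeas : Measurable F :=
    (measurable_gaussianPDFReal 0 1).mul
      (Real.measurable_exp.comp ((measurable_const.mul ((measurable_id.pow_const 2).inv)).neg))
  have hFbound : ∀ x, ‖F x‖ ≤ gaussianPDFReal 0 1 x := by
    intro x
    rw [Real.norm_eq_abs, abs_mul, abs_of_nonneg (gaussianPDFReal_nonneg 0 1 x),
      abs_of_pos (Real.exp_pos _)]
    have : Real.exp (-(t * (x^2)⁻¹)) ≤ 1 := by
      rw [Real.exp_le_one_iff]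
      have : (0:ℝ) ≤ t * (x^2)⁻¹ := by positivity
      linarith
    nlinarith [gaussianPDFReal_nonneg 0 1 x, Real.exp_pos (-(t * (x^2)⁻¹))]
  have hFint : Integrable F := (integrable_gaussianPDFReal 0 1).mono'
    hFmeas.aestronglyMeasurable (Filter.Eventually.of_forall hFbound)
  have hFeven : ∀ x, F (-x) = F x := by
    intro x
    simp only [hF, gaussianPDFReal, sub_zero, neg_sq]
  have hIoi : ∫ x in Ioi (0:ℝ), F x = (Real.sqrt (2*Real.pi))⁻¹ * (Real.exp (-c) * Real.sqrt (2*Real.pi) / 2) := by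
    rw [← keyI hc, ← integral_const_mul]
    apply setIntegral_congr_fun measurableSet_Ioi
    intro x hx
    have hx0 : (0:ℝ) < x := hx
    simp only [hF, gaussianPDFReal, sub_zero]
    push_cast
    rw [mul_one, mul_one, mul_assoc, ← Real.exp_add]
    congr 1
    rw [hc2]
    field_simp
    ring
  have hIic : ∫ x in Iic (0:ℝ), F x = ∫ x in Ioi (0:ℝ), F x := by
    have h := integral_comp_neg_Ioi 0 F
    rw [neg_zero] at h
    rw [← h]
    apply setIntegral_congr_fun measurableSet_Ioi
    intro x _
    exact hFeven x
  have htot : ∫ x : ℝ, F x = (∫ x in Iic (0:ℝ), F x) + ∫ x in Ioi (0:ℝ), F x :=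
    (intervalIntegral.integral_Iic_add_Ioi hFint.integrableOn hFint.integrableOn).symm
  rw [htot, hIic, hIoi]
  have hs : Real.sqrt (2*Real.pi) ≠ 0 := by positivity
  field_simp
  norm_num

/-- If `𝓝` is a standard Gaussian random variable, then for every `t ≥ 0` the
Laplace transform of `𝓝⁻²` is `E[exp(-t 𝓝⁻²)] = exp(-√(2t))`. -/
theorem statement9
    {Ω : Type*} [MeasurableSpace Ω] (μ : Measure Ω) [IsProbabilityMeasure μ]
    (N : Ω → ℝ) (hNmeas : Measurable N)
    (hN : Measure.map N μ = gaussianReal 0 1) :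
    ∀ t : ℝ, 0 ≤ t →
      ∫ ω, Real.exp (-(t * ((N ω) ^ 2)⁻¹)) ∂μ = Real.exp (-Real.sqrt (2 * t)) := by
  intro t ht
  rcases eq_or_lt_of_le ht with rfl | ht'
  · simp
  · have hemeas : Measurable (fun x : ℝ => Real.exp (-(t * (x^2)⁻¹))) :=
      Real.measurable_exp.comp ((measurable_const.mul ((measurable_id.pow_const 2).inv)).neg)
    have h1 : ∫ ω, Real.exp (-(t * ((N ω)^2)⁻¹)) ∂μ
        = ∫ x, Real.exp (-(t * (x^2)⁻¹)) ∂(Measure.map N μ) :=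
      (integral_map hNmeas.aemeasurable hemeas.aestronglyMeasurable).symm
    rw [h1, hN, gaussianReal_of_var_ne_zero 0 one_ne_zero]
    have hpdf : gaussianPDF 0 1 = fun x => ((Real.toNNReal (gaussianPDFReal 0 1 x) : NNReal) : ENNReal) := rfl
    rw [hpdf, integral_withDensity_eq_integral_smul ((measurable_gaussianPDFReal 0 1).real_toNNReal)]
    rw [← main_integral ht']
    congr 1
    ext x
    rw [NNReal.smul_def, Real.coe_toNNReal _ (gaussianPDFReal_nonneg 0 1 x), smul_eq_mul]
end

section
/- If 𝓔 and 𝓝 are independent random variables, 𝓔 having an exponential distribution of mean 1 and 𝓝 a standard Gaussian distribution, then for every s ≥ 0 one has E[exp(−s · 𝓔²/𝓝²)] = 1/(1 + √(2s)). -/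
open MeasureTheory ProbabilityTheory Filter Set Topology
open scoped NNReal ENNReal

open Real in
private lemma glasser {a : ℝ} (ha : 0 < a) :
    ∫ x in Ioi (0:ℝ), Real.exp (-(x^2/2 + a/x^2)) =
      Real.sqrt (π/2) * Real.exp (-Real.sqrt (2*a)) := by
  set b := Real.sqrt a with hbdef
  have hb : 0 < b := Real.sqrt_pos.mpr ha
  have hb2 : b^2 = a := Real.sq_sqrt ha.le
  set r : ℝ := Real.sqrt 2 with hrdef
  have hr : 0 < r := Real.sqrt_pos.mpr (by norm_num)
  have hr2 : r^2 = 2 := Real.sq_sqrt (by norm_num)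
  set h : ℝ → ℝ := fun x => x / r - b / x with hhdef
  set h' : ℝ → ℝ := fun x => 1 / r + b / x^2 with hh'def
  -- derivative
  have hderiv : ∀ x ∈ Ioi (0:ℝ), HasDerivWithinAt h (h' x) (Ioi 0) x := by
    intro x hx
    have hx0 : x ≠ 0 := ne_of_gt hx
    have : HasDerivAt (fun x => x / r - b / x) (1/r - b * (-(x^2)⁻¹)) x := by
      simpa [div_eq_mul_inv, mul_comm, Pi.sub_def] using
        (((hasDerivAt_id x).div_const r).sub ((hasDerivAt_inv hx0).const_mul b))
    have heq : 1/r - b * (-(x^2)⁻¹) = h' x := by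
      simp only [hh'def]; field_simp; ring
    exact (heq ▸ this).hasDerivWithinAt
  -- injectivity
  have hinj : InjOn h (Ioi 0) := by
    intro x hx y hy hxy
    have hx0 : (0:ℝ) < x := hx
    have hy0 : (0:ℝ) < y := hy
    have key : (x - y) * (x * y + r * b) = 0 := by
      have := hxy
      simp only [hhdef] at this
      field_simp at this
      nlinarith [this]
    have hpos : 0 < x * y + r * b := by positivity
    have := mul_eq_zero.mp key
    rcases this with h1 | h2
    · linarith
    · linarith
  -- surjectivity
  have himg : h '' Ioi 0 = univ := by
    apply eq_univ_of_forall
    intro u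
    set n : ℝ := (r*u + Real.sqrt (2*u^2 + 4*r*b))/2 with hndef
    have hs : Real.sqrt (2*u^2) < Real.sqrt (2*u^2 + 4*r*b) := by
      apply Real.sqrt_lt_sqrt (by positivity)
      nlinarith
    have hsq : Real.sqrt (2*u^2) = r * |u| := by
      rw [show 2*u^2 = 2 * u^2 by ring, Real.sqrt_mul (by norm_num), Real.sqrt_sq_eq_abs]
    have hn0 : 0 < n := by
      rw [hndef]
      have : r * |u| < Real.sqrt (2*u^2 + 4*r*b) := hsq ▸ hs
      have h2 : -(r*u) ≤ r * |u| := by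
        rw [← mul_neg]
        exact mul_le_mul_of_nonneg_left (neg_le_abs u) hr.le
      linarith
    have hBsq : (Real.sqrt (2*u^2 + 4*r*b))^2 = 2*u^2 + 4*r*b :=
      Real.sq_sqrt (by positivity)
    have hquad : n^2 = r*u*n + r*b := by
      rw [hndef]; nlinarith [hBsq]
    refine ⟨n, hn0, ?_⟩
    simp only [hhdef]
    field_simp
    nlinarith [hquad]
  -- expansion of (h x)^2
  have hexp : ∀ x : ℝ, x ≠ 0 → (h x)^2 = x^2/2 + a/x^2 - r*b := by
    intro x hx0
    have hr0 : r ≠ 0 := ne_of_gt hr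
    simp only [hhdef]
    have h1 : (x / r - b / x)^2 = x^2/r^2 - 2*b/r + b^2/x^2 := by
      field_simp; ring
    rw [h1, hr2, hb2]
    have h2 : 2*b/r = r*b := by
      rw [eq_comm, eq_div_iff hr0]; nlinarith
    rw [h2]; ring
  -- continuity of the integrand on Ioi 0
  have hcont : ContinuousOn (fun x => Real.exp (-(h x)^2)) (Ioi 0) := by
    apply (Real.continuous_exp.comp_continuousOn)
    apply ContinuousOn.neg
    apply ContinuousOn.pow
    simp only [hhdef]
    exact (continuousOn_id.div_const r).sub
      (continuousOn_const.div continuousOn_id (fun x hx => ne_of_gt hx))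
  -- integrability of exp(-(h x)^2) on Ioi 0
  have i1 : IntegrableOn (fun x => Real.exp (-(h x)^2)) (Ioi 0) := by
    have hgint : Integrable (fun x : ℝ => Real.exp (r*b) * Real.exp (-(1/2 : ℝ) * x^2)) := by
      exact (integrable_exp_neg_mul_sq (by norm_num : (0:ℝ) < 1/2)).const_mul _
    refine Integrable.mono' hgint.integrableOn
      (hcont.aestronglyMeasurable measurableSet_Ioi) ?_
    filter_upwards [self_mem_ae_restrict measurableSet_Ioi] with x hx
    rw [Real.norm_eq_abs, abs_of_pos (Real.exp_pos _), ← Real.exp_add]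
    apply Real.exp_le_exp.mpr
    rw [hexp x (ne_of_gt hx)]
    have : 0 ≤ a / x^2 := by positivity
    nlinarith
  -- substitution g : x ↦ r*b/x on Ioi 0
  set g : ℝ → ℝ := fun x => r*b/x with hgdef
  have hgderiv : ∀ x ∈ Ioi (0:ℝ), HasDerivWithinAt g (-(r*b)/x^2) (Ioi 0) x := by
    intro x hx
    have hx0 : x ≠ 0 := ne_of_gt hx
    have : HasDerivAt g ((r*b) * (-(x^2)⁻¹)) x := by
      simpa [hgdef, div_eq_mul_inv] using (hasDerivAt_inv hx0).const_mul (r*b)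
    have heq : (r*b) * (-(x^2)⁻¹) = -(r*b)/x^2 := by field_simp
    exact (heq ▸ this).hasDerivWithinAt
  have hginj : InjOn g (Ioi 0) := by
    intro x hx y hy hxy
    have hx0 : (0:ℝ) < x := hx
    have hy0 : (0:ℝ) < y := hy
    have hfix : ∀ z : ℝ, 0 < z → g (g z) = z := by
      intro z hz
      simp only [hgdef]
      field_simp
    rw [← hfix x hx0, ← hfix y hy0, hxy]
  have hgimg : g '' Ioi 0 = Ioi 0 := by
    ext y
    constructor
    · rintro ⟨x, hx, rfl⟩
      exact div_pos (by positivity : (0:ℝ) < r*b) hx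
    · intro hy
      refine ⟨r*b/y, div_pos (by positivity : (0:ℝ) < r*b) hy, ?_⟩
      simp only [hgdef]
      field_simp
  have hgh : ∀ x : ℝ, 0 < x → h (g x) = - h x := by
    intro x hx
    simp only [hhdef, hgdef]
    have hr0 : r ≠ 0 := ne_of_gt hr
    have hb0 : b ≠ 0 := ne_of_gt hb
    field_simp
    ring
  -- claim2 : ∫ (r*b/x²) exp(-(h x)²) = ∫ exp(-(h x)²)
  have claim2 : ∫ x in Ioi (0:ℝ), (r*b/x^2) * Real.exp (-(h x)^2)
      = ∫ x in Ioi (0:ℝ), Real.exp (-(h x)^2) := by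
    conv_rhs => rw [← hgimg]
    rw [integral_image_eq_integral_abs_deriv_smul measurableSet_Ioi hgderiv hginj]
    apply setIntegral_congr_fun measurableSet_Ioi
    intro x hx
    have hx0 : (0:ℝ) < x := hx
    simp only [smul_eq_mul]
    rw [hgh x hx0]
    have : |(-(r*b)/x^2)| = r*b/x^2 := by
      rw [abs_div, abs_neg, abs_of_pos (by positivity : (0:ℝ) < r*b),
        abs_of_pos (by positivity : (0:ℝ) < x^2)]
    rw [this, neg_sq]
  -- integrability of (r*b/x²) exp(-(h x)²)
  have i2 : IntegrableOn (fun x => (r*b/x^2) * Real.exp (-(h x)^2)) (Ioi 0) := by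
    have := (integrableOn_image_iff_integrableOn_abs_deriv_smul measurableSet_Ioi
      hgderiv hginj (fun x => Real.exp (-(h x)^2))).mp (hgimg ▸ i1)
    apply this.congr_fun ?_ measurableSet_Ioi
    intro x hx
    have hx0 : (0:ℝ) < x := hx
    simp only [smul_eq_mul]
    rw [hgh x hx0]
    have : |(-(r*b)/x^2)| = r*b/x^2 := by
      rw [abs_div, abs_neg, abs_of_pos (by positivity : (0:ℝ) < r*b),
        abs_of_pos (by positivity : (0:ℝ) < x^2)]
    rw [this, neg_sq]
  -- claim1 via first substitution
  have claim1 : Real.sqrt π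
      = ∫ x in Ioi (0:ℝ), (1/r + b/x^2) * Real.exp (-(h x)^2) := by
    have hgauss : ∫ u : ℝ, Real.exp (-u^2) = Real.sqrt π := by
      simpa using integral_gaussian 1
    rw [← hgauss, ← setIntegral_univ, ← himg,
      integral_image_eq_integral_abs_deriv_smul measurableSet_Ioi hderiv hinj]
    apply setIntegral_congr_fun measurableSet_Ioi
    intro x hx
    have hx0 : (0:ℝ) < x := hx
    simp only [smul_eq_mul]
    congr 1
    simp only [hh'def]
    rw [abs_of_pos (by positivity)]
  -- split and solve for K
  set K := ∫ x in Ioi (0:ℝ), Real.exp (-(h x)^2) with hKdef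
  have hsplit : Real.sqrt π = (1/r) * K + (1/r) * K := by
    rw [claim1]
    have e1 : ∀ x ∈ Ioi (0:ℝ), (1/r + b/x^2) * Real.exp (-(h x)^2)
        = (1/r) * Real.exp (-(h x)^2) + (1/r) * ((r*b/x^2) * Real.exp (-(h x)^2)) := by
      intro x hx
      have hx0 : (0:ℝ) < x := hx
      have hr0 : r ≠ 0 := ne_of_gt hr
      rw [add_mul]
      congr 1
      rw [← mul_assoc]
      congr 1
      field_simp
    rw [setIntegral_congr_fun measurableSet_Ioi e1,
      integral_add (i1.const_mul _) (i2.const_mul _),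
      integral_const_mul, integral_const_mul, claim2]
  have hK : K = Real.sqrt (π/2) := by
    have h2K : Real.sqrt π = (2/r) * K := by rw [hsplit]; ring
    have : K = Real.sqrt π * r / 2 := by
      have hr0 : r ≠ 0 := ne_of_gt hr
      field_simp at h2K ⊢
      linarith
    rw [this, Real.sqrt_div pi_pos.le]
    rw [div_eq_div_iff (by norm_num) (ne_of_gt hr)]
    linear_combination Real.sqrt π * hr2
  -- final computation
  have efin : ∀ x ∈ Ioi (0:ℝ), Real.exp (-(x^2/2 + a/x^2))
      = Real.exp (-(r*b)) * Real.exp (-(h x)^2) := by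
    intro x hx
    rw [← Real.exp_add]
    congr 1
    rw [hexp x (ne_of_gt hx)]
    ring
  rw [setIntegral_congr_fun measurableSet_Ioi efin, integral_const_mul, ← hKdef, hK]
  have hrb : r * b = Real.sqrt (2*a) := by
    rw [hrdef, hbdef, ← Real.sqrt_mul (by norm_num)]
  rw [hrb]
  ring

open Real in
lemma gauss_inv_sq {a : ℝ} (ha : 0 ≤ a) :
    ∫ n, Real.exp (-(a / n^2)) ∂(ProbabilityTheory.gaussianReal 0 1) =
      Real.exp (-Real.sqrt (2*a)) := by
  rcases eq_or_lt_of_le ha with rfl | ha'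
  · simp
  rw [ProbabilityTheory.gaussianReal_of_var_ne_zero 0 one_ne_zero]
  have hpdf_eq : ProbabilityTheory.gaussianPDF 0 1 = fun x =>
      ((Real.toNNReal (ProbabilityTheory.gaussianPDFReal 0 1 x) : ℝ≥0) : ℝ≥0∞) := rfl
  rw [hpdf_eq, integral_withDensity_eq_integral_smul
    ((ProbabilityTheory.measurable_gaussianPDFReal 0 1).real_toNNReal)]
  set c : ℝ := (Real.sqrt (2*π))⁻¹ with hcdef
  set f : ℝ → ℝ := fun t => c * Real.exp (-(t^2/2 + a/t^2)) with hfdef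
  have key : (fun x => (Real.toNNReal (ProbabilityTheory.gaussianPDFReal 0 1 x)) •
      Real.exp (-(a / x^2)))
      = fun x => f |x| := by
    funext x
    rw [NNReal.smul_def, Real.coe_toNNReal _ (ProbabilityTheory.gaussianPDFReal_nonneg 0 1 x)]
    have hpdf : ProbabilityTheory.gaussianPDFReal 0 1 x = c * Real.exp (-(x^2/2)) := by
      rw [ProbabilityTheory.gaussianPDFReal, hcdef]
      norm_num
      exact Or.inl (by ring)
    rw [hpdf, smul_eq_mul, hfdef]
    simp only
    have hsq : |x|^2 = x^2 := sq_abs x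
    rw [mul_assoc, ← Real.exp_add, hsq]
    ring_nf
  rw [key, integral_comp_abs (f := f), hfdef]
  simp only
  rw [integral_const_mul, glasser ha']
  have hs2 : Real.sqrt 2 ≠ 0 := by positivity
  have hspi : Real.sqrt π ≠ 0 := by positivity
  have h2pi : Real.sqrt (2*π) = Real.sqrt 2 * Real.sqrt π := Real.sqrt_mul (by norm_num) π
  have hpi2 : Real.sqrt (π/2) = Real.sqrt π / Real.sqrt 2 := Real.sqrt_div pi_pos.le 2
  have h22 : Real.sqrt 2 * Real.sqrt 2 = 2 := Real.mul_self_sqrt (by norm_num)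
  rw [hcdef, h2pi, hpi2]
  field_simp
  linear_combination (-1 : ℝ)
    * (Real.sq_sqrt (by norm_num : (0:ℝ) ≤ 2))

lemma exp_laplace {c : ℝ} (hc : 0 ≤ c) :
    ∫ x, Real.exp (-(c * |x|)) ∂(ProbabilityTheory.expMeasure 1) = 1/(1+c) := by
  have h1c : (0:ℝ) < 1 + c := by linarith
  have hmeq : ProbabilityTheory.expMeasure 1 = volume.withDensity (fun x =>
      ((Real.toNNReal (ProbabilityTheory.exponentialPDFReal 1 x) : ℝ≥0) : ℝ≥0∞)) := rfl
  rw [hmeq, integral_withDensity_eq_integral_smul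
    (ProbabilityTheory.measurable_exponentialPDFReal 1).real_toNNReal]
  have key : (fun x => (Real.toNNReal (ProbabilityTheory.exponentialPDFReal 1 x)) •
      Real.exp (-(c * |x|)))
      = Set.indicator (Ici (0:ℝ)) (fun x => Real.exp (-((1+c) * x))) := by
    funext x
    rw [NNReal.smul_def,
      Real.coe_toNNReal _ (ProbabilityTheory.exponentialPDFReal_nonneg one_pos x)]
    have hpdf : ProbabilityTheory.exponentialPDFReal 1 x
        = if 0 ≤ x then Real.exp (-x) else 0 := by
      rw [ProbabilityTheory.exponentialPDFReal, ProbabilityTheory.gammaPDFReal]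
      norm_num
    rw [hpdf]
    by_cases hx : 0 ≤ x
    · rw [if_pos hx, Set.indicator_of_mem (mem_Ici.mpr hx), smul_eq_mul,
        abs_of_nonneg hx, ← Real.exp_add]
      ring_nf
    · rw [if_neg hx, Set.indicator_of_notMem (by simpa using hx), zero_smul]
  rw [key, integral_indicator measurableSet_Ici, integral_Ici_eq_integral_Ioi]
  have := integral_comp_mul_left_Ioi (fun x => Real.exp (-x)) 0 h1c
  simp only [mul_zero, smul_eq_mul] at this
  rw [this, integral_exp_neg_Ioi_zero]
  rw [mul_one, one_div]

/-- If `𝓔` and `𝓝` are independent, `𝓔` exponential of mean `1` and `𝓝`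
standard Gaussian, then for every `s ≥ 0`, `E[exp(-s 𝓔²/𝓝²)] = 1/(1 + √(2s))`. -/
theorem statement17
    {Ω : Type*} [MeasurableSpace Ω] (μ : Measure Ω) [IsProbabilityMeasure μ]
    (E N : Ω → ℝ) (hEmeas : Measurable E) (hNmeas : Measurable N)
    (hE : Measure.map E μ = expMeasure 1)
    (hN : Measure.map N μ = gaussianReal 0 1)
    (hEN : IndepFun E N μ) :
    ∀ s : ℝ, 0 ≤ s →
      ∫ ω, Real.exp (-(s * (E ω) ^ 2 / (N ω) ^ 2)) ∂μ = 1 / (1 + Real.sqrt (2 * s)) := by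
  intro s hs
  haveI : IsProbabilityMeasure (expMeasure 1) :=
    ProbabilityTheory.isProbabilityMeasure_expMeasure one_pos
  have hmap : μ.map (fun ω => (E ω, N ω)) = (expMeasure 1).prod (gaussianReal 0 1) := by
    rw [← hE, ← hN]
    exact (ProbabilityTheory.indepFun_iff_map_prod_eq_prod_map_map
      hEmeas.aemeasurable hNmeas.aemeasurable).mp hEN
  have hf_meas : Measurable fun p : ℝ × ℝ => Real.exp (-(s * p.1 ^ 2 / p.2 ^ 2)) :=
    ((((measurable_fst.pow_const 2).const_mul s).div
      (measurable_snd.pow_const 2)).neg).exp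
  have hstep : ∫ ω, Real.exp (-(s * (E ω) ^ 2 / (N ω) ^ 2)) ∂μ
      = ∫ p : ℝ × ℝ, Real.exp (-(s * p.1 ^ 2 / p.2 ^ 2))
        ∂((expMeasure 1).prod (gaussianReal 0 1)) := by
    rw [← hmap, integral_map (hEmeas.prodMk hNmeas).aemeasurable
      hf_meas.aestronglyMeasurable]
  rw [hstep]
  have hintg : Integrable (fun p : ℝ × ℝ => Real.exp (-(s * p.1 ^ 2 / p.2 ^ 2)))
      ((expMeasure 1).prod (gaussianReal 0 1)) := by
    refine Integrable.mono' (integrable_const 1) hf_meas.aestronglyMeasurable ?_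
    filter_upwards with p
    rw [Real.norm_eq_abs, abs_of_pos (Real.exp_pos _)]
    apply Real.exp_le_one_iff.mpr
    simp only [neg_nonpos]
    exact div_nonneg (by positivity) (sq_nonneg _)
  rw [MeasureTheory.integral_prod _ hintg]
  have hinner : ∀ x : ℝ, ∫ n, Real.exp (-(s * x ^ 2 / n ^ 2)) ∂(gaussianReal 0 1)
      = Real.exp (-(Real.sqrt (2*s) * |x|)) := by
    intro x
    have h1 : ∫ n, Real.exp (-(s * x ^ 2 / n ^ 2)) ∂(gaussianReal 0 1)
        = Real.exp (-Real.sqrt (2*(s * x ^ 2))) := by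
      exact gauss_inv_sq (by positivity)
    rw [h1]
    congr 1
    rw [show 2*(s*x^2) = (2*s)*x^2 by ring, Real.sqrt_mul (by positivity),
      Real.sqrt_sq_eq_abs]
  calc ∫ x, ∫ n, Real.exp (-(s * x ^ 2 / n ^ 2)) ∂(gaussianReal 0 1) ∂(expMeasure 1)
      = ∫ x, Real.exp (-(Real.sqrt (2*s) * |x|)) ∂(expMeasure 1) := by
        apply integral_congr_ae
        filter_upwards with x
        exact hinner x
    _ = 1 / (1 + Real.sqrt (2*s)) := exp_laplace (Real.sqrt_nonneg _)
end
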